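/- arXiv:1304.0093 — 2 statements merged into one kernel-verified Lean document; each statement's English description precedes it below -/
import Mathlib

section
/- An automorphism ν of U belongs to N (the normalizer of (K*)^λ in Aut(U)) if and only if ν = λ_m ∘ ζ for some m ∈ K* and some ζ ∈ Aut(U) that is central with respect to the basis (b_i), i.e., ζ maps each b_i into the Z-span of the (b_j), where Z is the center of K. -/
/-- `ν ∈ N` (the normalizer condition `∀ k ≠ 0, ∃ l ≠ 0, νλ_k = λ_l ν`, in
right-operator notation `lam k ∘ₗ ν = ν ∘ₗ lam l`) iff `ν = λ_m ζ` (as functions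
`ζ ∘ₗ lam m`) for some `m ∈ K*` and some `ζ ∈ Aut(U)` central w.r.t. `(b i)`,
i.e. all coordinates of each `ζ (b i)` lie in the center `Z` of `K`. -/
theorem stmt12 {K U I : Type*} [DivisionRing K] [AddCommGroup U] [Module K U]
    [Nonempty I] (b : Module.Basis I K U) (lam : K → Module.End K U)
    (hlam : ∀ (k : K) (i : I), lam k (b i) = k • b i)
    (ν : U ≃ₗ[K] U) :
    (∀ k : K, k ≠ 0 → ∃ l : K, l ≠ 0 ∧
        lam k ∘ₗ (ν : U →ₗ[K] U) = (ν : U →ₗ[K] U) ∘ₗ lam l) ↔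
    ∃ (m : K) (ζ : U ≃ₗ[K] U), m ≠ 0 ∧
      (∀ i j : I, b.repr (ζ (b i)) j ∈ Subring.center K) ∧
      (ν : U →ₗ[K] U) = (ζ : U →ₗ[K] U) ∘ₗ lam m := by
  classical
  have repr_lam : ∀ (k : K) (u : U) (j : I), b.repr (lam k u) j = b.repr u j * k := by
    intro k u j
    have hcomp : (b.coord j) ∘ₗ lam k = LinearMap.toSpanSingleton K K k ∘ₗ b.coord j := by
      apply b.ext
      intro i
      simp only [LinearMap.comp_apply, hlam, Module.Basis.coord_apply, map_smul,
        Finsupp.smul_apply, smul_eq_mul, LinearMap.toSpanSingleton_apply,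
        Module.Basis.repr_self, Finsupp.single_apply]
      by_cases hij : i = j <;> simp [hij]
    have := LinearMap.congr_fun hcomp u
    simpa [Module.Basis.coord_apply, LinearMap.toSpanSingleton_apply, smul_eq_mul] using this
  have repr_smul : ∀ (f : U ≃ₗ[K] U) (c : K) (x : U) (j : I),
      b.repr (f (c • x)) j = c * b.repr (f x) j := by
    intro f c x j
    rw [map_smul, map_smul, Finsupp.smul_apply, smul_eq_mul]
  constructor
  · intro h
    obtain ⟨i0⟩ := ‹Nonempty I›
    have hν0 : ν (b i0) ≠ 0 := by
      simp [b.ne_zero i0]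
    obtain ⟨j0, hm0⟩ : ∃ j, b.repr (ν (b i0)) j ≠ 0 := by
      by_contra hcon
      push_neg at hcon
      exact hν0 ((LinearEquiv.map_eq_zero_iff b.repr).mp (Finsupp.ext hcon))
    set m := b.repr (ν (b i0)) j0 with hm
    have key : ∀ k : K, k ≠ 0 → ∀ i j,
        b.repr (ν (b i)) j * k = (m * k * m⁻¹) * b.repr (ν (b i)) j := by
      intro k hk i j
      obtain ⟨l, hl0, hcomp⟩ := h k hk
      have hgen : ∀ i j, b.repr (ν (b i)) j * k = l * b.repr (ν (b i)) j := by
        intro i j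
        have h1 := LinearMap.congr_fun hcomp (b i)
        simp only [LinearMap.comp_apply, LinearEquiv.coe_coe] at h1
        have h2 := congrArg (fun u => b.repr u j) h1
        rw [repr_lam, hlam, repr_smul] at h2
        exact h2
      have hl : l = m * k * m⁻¹ := by
        have h3 := hgen i0 j0
        rw [← hm] at h3
        rw [h3, mul_assoc, mul_inv_cancel₀ hm0, mul_one]
      rw [← hl]
      exact hgen i j
    have hc : ∀ i j, m⁻¹ * b.repr (ν (b i)) j ∈ Subring.center K := by
      intro i j
      rw [Subring.mem_center_iff]
      intro g
      by_cases hg : g = 0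
      · simp [hg]
      · have hkey := key g hg i j
        have h4 : m⁻¹ * b.repr (ν (b i)) j * g = m⁻¹ * (b.repr (ν (b i)) j * g) :=
          mul_assoc _ _ _
        rw [hkey] at h4
        rw [h4]
        simp [← mul_assoc, inv_mul_cancel₀ hm0]
    have hinv1 : lam m⁻¹ ∘ₗ lam m = LinearMap.id := by
      apply b.ext
      intro i
      simp [hlam, map_smul, smul_smul, mul_inv_cancel₀ hm0]
    have hinv2 : lam m ∘ₗ lam m⁻¹ = LinearMap.id := by
      apply b.ext
      intro i
      simp [hlam, map_smul, smul_smul, inv_mul_cancel₀ hm0]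
    set e : U ≃ₗ[K] U := LinearEquiv.ofLinear (lam m⁻¹) (lam m) hinv1 hinv2 with he
    refine ⟨m, e.trans ν, hm0, ?_, ?_⟩
    · intro i j
      have h5 : (e.trans ν) (b i) = ν (m⁻¹ • b i) := by
        simp [LinearEquiv.trans_apply, he, LinearEquiv.ofLinear_apply, hlam]
      rw [h5, repr_smul]
      exact hc i j
    · apply b.ext
      intro i
      simp [LinearEquiv.trans_apply, he, LinearEquiv.ofLinear_apply, hlam,
        map_smul, smul_smul, mul_inv_cancel₀ hm0]
  · rintro ⟨m, ζ, hm0, hcen, hν⟩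
    intro k hk
    refine ⟨m * k * m⁻¹, mul_ne_zero (mul_ne_zero hm0 hk) (inv_ne_zero hm0), ?_⟩
    have hν' : ∀ x : U, ν x = ζ (lam m x) := fun x => LinearMap.congr_fun hν x
    apply b.ext
    intro i
    simp only [LinearMap.comp_apply, LinearEquiv.coe_coe]
    apply b.repr.injective
    ext j
    rw [repr_lam]
    rw [hν' (b i), hlam, repr_smul]
    rw [hlam, repr_smul, hν' (b i), hlam, repr_smul]
    have hz := (Subring.mem_center_iff.mp (hcen i j)) k
    set z := b.repr (ζ (b i)) j
    calc m * z * k = m * (k * z) := by rw [mul_assoc, ← hz]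
      _ = m * k * m⁻¹ * (m * z) := by
          rw [mul_assoc (m*k) m⁻¹, inv_mul_cancel_left₀ hm0, mul_assoc]
end

section
/- A line T of P(K, U×U) is a transversal of the standard regulus R₀ (i.e., meets each element of R₀ in exactly one point) if and only if T = K(z,0) ⊕ K(0,z) for some nonzero z in the Z-subspace of U with respect to (b_i). -/
section Auxiliary

variable {K U I : Type*} [DivisionRing K] [AddCommGroup U] [Module K U]

/-- The coordinates of `lam k x` are those of `x`, right-multiplied by `k`. -/
private lemma stmt15.repr_lam (b : Module.Basis I K U) (lam : K → Module.End K U)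
    (hlam : ∀ (k : K) (i : I), lam k (b i) = k • b i) (k : K) (x : U) (j : I) :
    b.repr (lam k x) j = b.repr x j * k := by
  have h : (b.repr.toLinearMap.comp (lam k) : U →ₗ[K] (I →₀ K)) =
      (Finsupp.mapRange.linearMap (LinearMap.toSpanSingleton K K k)).comp b.repr.toLinearMap := by
    apply b.ext
    intro i
    simp [hlam k i, LinearMap.toSpanSingleton, Module.Basis.repr_self]
  have := congrArg (fun f => (f x) j) h
  simpa [LinearMap.toSpanSingleton] using this

/-- If all coordinates of `z` are central then `lam k z = k • z`. -/
private lemma stmt15.lam_central (b : Module.Basis I K U) (lam : K → Module.End K U)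
    (hlam : ∀ (k : K) (i : I), lam k (b i) = k • b i) (k : K) (z : U)
    (hz : ∀ j : I, b.repr z j ∈ Subring.center K) :
    lam k z = k • z := by
  apply b.repr.injective
  ext j
  rw [stmt15.repr_lam b lam hlam]
  have hc : b.repr z j * k = k * b.repr z j :=
    ((Subring.mem_center_iff).1 (hz j) k).symm
  simp [hc]

/-- A submodule of `finrank` one contains a nonzero vector. -/
private lemma stmt15.exists_mem_ne_zero {M : Type*} [AddCommGroup M] [Module K M]
    (S : Submodule K M) (h : Module.finrank K S = 1) : ∃ v ∈ S, v ≠ 0 := by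
  have : Module.Finite K S := Module.finite_of_finrank_pos (by rw [h]; norm_num)
  obtain ⟨x, hx⟩ := Module.finrank_pos_iff_exists_ne_zero.mp
    (by rw [h]; norm_num : 0 < Module.finrank K S)
  exact ⟨x.1, x.2, fun h0 => hx (Subtype.ext h0)⟩

end Auxiliary

/-- A line `T` (2-dimensional subspace) of `U × U` is a transversal of the
standard regulus `R₀` (meets each element of `R₀` in exactly one point, i.e.
in a 1-dimensional subspace) iff `T = K(z,0) ⊕ K(0,z)` for some nonzero `z`
in the `Z`-subspace of `U` w.r.t. `(b i)` (all coordinates of `z` central). -/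
theorem stmt15 {K U I : Type*} [DivisionRing K] [AddCommGroup U] [Module K U]
    (b : Module.Basis I K U) (lam : K → Module.End K U)
    (hlam : ∀ (k : K) (i : I), lam k (b i) = k • b i)
    (T : Submodule K (U × U)) (hT : Module.finrank K T = 2) :
    (∀ X ∈ insert (Submodule.fst K U U)
        (Set.range fun k : K =>
          LinearMap.range ((lam k : U →ₗ[K] U).prod (LinearMap.id : U →ₗ[K] U))),
        Module.finrank K ↥(T ⊓ X) = 1) ↔
    ∃ z : U, z ≠ 0 ∧ (∀ j : I, b.repr z j ∈ Subring.center K) ∧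
      T = Submodule.span K ({(z, 0), (0, z)} : Set (U × U)) := by
  constructor
  · -- forward direction
    intro h
    have hfd : FiniteDimensional K T := Module.finite_of_finrank_pos (by rw [hT]; norm_num)
    have hlam0 : ∀ u : U, lam 0 u = 0 := by
      intro u; apply b.repr.injective; ext j
      simp [stmt15.repr_lam b lam hlam]
    have hlam1 : ∀ u : U, lam 1 u = u := by
      intro u; apply b.repr.injective; ext j
      simp [stmt15.repr_lam b lam hlam]
    have hR : ∀ k : K, Module.finrank K
        ↥(T ⊓ LinearMap.range ((lam k : U →ₗ[K] U).prod (LinearMap.id : U →ₗ[K] U))) = 1 :=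
      fun k => h _ (Set.mem_insert_iff.2 (Or.inr ⟨k, rfl⟩))
    -- the element (z, 0)
    obtain ⟨v, hvmem, hvne⟩ := stmt15.exists_mem_ne_zero _ (h _ (Set.mem_insert _ _))
    obtain ⟨hvT, hvF⟩ := Submodule.mem_inf.1 hvmem
    have hv2 : v.2 = 0 := by simpa [Submodule.fst, Submodule.mem_comap] using hvF
    set z := v.1 with hzdef
    have hvz : v = (z, 0) := Prod.ext rfl hv2
    have hz0 : z ≠ 0 := by
      intro h0
      exact hvne (by rw [hvz, h0]; rfl)
    -- the element (0, w)
    obtain ⟨x0, hx0mem, hx0ne⟩ := stmt15.exists_mem_ne_zero _ (hR 0)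
    obtain ⟨hx0T, hx0R⟩ := Submodule.mem_inf.1 hx0mem
    obtain ⟨w, hw⟩ := LinearMap.mem_range.1 hx0R
    have hx0eq : x0 = (0, w) := by rw [← hw]; ext <;> simp [hlam0]
    have hw0 : w ≠ 0 := by
      intro h0
      exact hx0ne (by rw [hx0eq, h0]; rfl)
    -- T = span {(z,0), (0,w)}
    have hli : LinearIndependent K ![((z, 0) : U × U), (0, w)] := by
      refine LinearIndependent.pair_iff.2 fun s t hst => ?_
      have h1 : s • z = 0 := by have := congrArg Prod.fst hst; simpa using this
      have h2 : t • w = 0 := by have := congrArg Prod.snd hst; simpa using this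
      exact ⟨(smul_eq_zero.1 h1).resolve_right hz0, (smul_eq_zero.1 h2).resolve_right hw0⟩
    have hrange : Set.range ![((z, 0) : U × U), (0, w)] = {(z, 0), (0, w)} := by
      simp only [Matrix.range_cons, Matrix.range_empty, Set.union_empty, Set.union_singleton]
      exact Set.pair_comm _ _
    have hspan : Submodule.span K ({(z, 0), (0, w)} : Set (U × U)) = T := by
      apply Submodule.eq_of_le_of_finrank_le
      · rw [Submodule.span_le, Set.insert_subset_iff, Set.singleton_subset_iff]
        exact ⟨hvz ▸ hvT, hx0eq ▸ hx0T⟩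
      · rw [hT, ← hrange, finrank_span_eq_card hli]
        simp
    -- the diagonal element, k = 1
    obtain ⟨x1, hx1mem, hx1ne⟩ := stmt15.exists_mem_ne_zero _ (hR 1)
    obtain ⟨hx1T, hx1R⟩ := Submodule.mem_inf.1 hx1mem
    obtain ⟨u, hu⟩ := LinearMap.mem_range.1 hx1R
    have hx1eq : x1 = (u, u) := by rw [← hu]; ext <;> simp [hlam1]
    have hune : u ≠ 0 := by
      intro h0
      exact hx1ne (by rw [hx1eq, h0]; rfl)
    rw [← hspan, Submodule.mem_span_pair] at hx1T
    obtain ⟨s, t, hst⟩ := hx1T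
    have hsz : s • z = u := by
      have := congrArg Prod.fst (hst.trans hx1eq); simpa using this
    have htw : t • w = u := by
      have := congrArg Prod.snd (hst.trans hx1eq); simpa using this
    have hsne : s ≠ 0 := by
      intro h0; rw [h0, zero_smul] at hsz; exact hune hsz.symm
    have htne : t ≠ 0 := by
      intro h0; rw [h0, zero_smul] at htw; exact hune htw.symm
    set c : K := t⁻¹ * s with hcdef
    have hcne : c ≠ 0 := mul_ne_zero (inv_ne_zero htne) hsne
    have hwc : w = c • z := by
      calc w = t⁻¹ • (t • w) := by rw [smul_smul, inv_mul_cancel₀ htne, one_smul]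
      _ = t⁻¹ • (s • z) := by rw [htw, hsz]
      _ = c • z := by rw [smul_smul]
    -- key condition for each k
    have hkey : ∀ k : K, ∃ d s' : K, d ≠ 0 ∧
        ∀ j, d * (b.repr z j * k) = s' * b.repr z j := by
      intro k
      obtain ⟨x, hxmem, hxne⟩ := stmt15.exists_mem_ne_zero _ (hR k)
      obtain ⟨hxT, hxR⟩ := Submodule.mem_inf.1 hxmem
      obtain ⟨u', hu'⟩ := LinearMap.mem_range.1 hxR
      rw [← hspan, Submodule.mem_span_pair] at hxT
      obtain ⟨s', t', hst'⟩ := hxT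
      have hx1 : lam k u' = s' • z := by
        have := congrArg Prod.fst (hu'.trans hst'.symm); simpa using this
      have hx2 : u' = (t' * c) • z := by
        have h2 : u' = t' • w := by
          have := congrArg Prod.snd (hu'.trans hst'.symm); simpa using this
        rw [h2, hwc, smul_smul]
      have hd : t' * c ≠ 0 := by
        intro h0
        rw [h0, zero_smul] at hx2
        exact hxne (by rw [← hu', hx2, map_zero])
      refine ⟨t' * c, s', hd, fun j => ?_⟩
      rw [hx2] at hx1
      have := congrArg (fun y => b.repr y j) hx1
      simpa [stmt15.repr_lam b lam hlam, Finsupp.smul_apply, smul_eq_mul, mul_assoc] using this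
    -- pick a coordinate j0 with nonzero entry
    obtain ⟨j0, hj0⟩ : ∃ j0, b.repr z j0 ≠ 0 := by
      by_contra hc
      push_neg at hc
      exact hz0 (by simpa using b.repr.injective (Finsupp.ext fun j => by simp [hc j]))
    set a : K := b.repr z j0 with hadef
    have hcent : ∀ j, a⁻¹ * b.repr z j ∈ Subring.center K := by
      intro j
      rw [Subring.mem_center_iff]
      intro k
      obtain ⟨d, s', hd, hds⟩ := hkey k
      have e0 := hds j0
      have ej := hds j
      set zj : K := b.repr z j with hzjdef
      have hs' : s' = d * (a * (k * a⁻¹)) := by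
        calc s' = s' * a * a⁻¹ := by rw [mul_assoc, mul_inv_cancel₀ hj0, mul_one]
        _ = d * (a * k) * a⁻¹ := by rw [← e0]
        _ = d * (a * (k * a⁻¹)) := by noncomm_ring
      rw [hs'] at ej
      have e2 : zj * k = a * (k * (a⁻¹ * zj)) :=
        mul_left_cancel₀ hd (by rw [ej]; noncomm_ring)
      have e3 : a⁻¹ * (zj * k) = k * (a⁻¹ * zj) := by
        rw [e2, ← mul_assoc, inv_mul_cancel₀ hj0, one_mul]
      calc k * (a⁻¹ * zj) = a⁻¹ * (zj * k) := e3.symm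
      _ = a⁻¹ * zj * k := by rw [mul_assoc]
    refine ⟨a⁻¹ • z, smul_ne_zero (inv_ne_zero hj0) hz0, ?_, ?_⟩
    · intro j
      have : b.repr (a⁻¹ • z) j = a⁻¹ * b.repr z j := by
        rw [map_smul, Finsupp.smul_apply, smul_eq_mul]
      rw [this]
      exact hcent j
    · rw [← hspan]
      apply le_antisymm
      · rw [Submodule.span_le, Set.insert_subset_iff, Set.singleton_subset_iff]
        constructor
        · refine SetLike.mem_coe.2 (Submodule.mem_span_pair.2 ⟨a, 0, ?_⟩)
          ext <;> simp [smul_smul, mul_inv_cancel₀ hj0]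
        · refine SetLike.mem_coe.2 (Submodule.mem_span_pair.2 ⟨0, c * a, ?_⟩)
          ext <;> simp [smul_smul, hwc, mul_assoc, inv_mul_cancel₀ hj0, mul_inv_cancel₀ hj0]
      · rw [Submodule.span_le, Set.insert_subset_iff, Set.singleton_subset_iff]
        constructor
        · exact SetLike.mem_coe.2 (Submodule.mem_span_pair.2 ⟨a⁻¹, 0, by ext <;> simp⟩)
        · refine SetLike.mem_coe.2 (Submodule.mem_span_pair.2 ⟨0, a⁻¹ * c⁻¹, ?_⟩)
          ext <;> simp [hwc, smul_smul, mul_assoc, inv_mul_cancel₀ hcne]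
  · -- backward direction
    rintro ⟨z, hz0, hzc, hTs⟩
    have hlamz : ∀ k : K, lam k z = k • z := fun k => stmt15.lam_central b lam hlam k z hzc
    intro X hX
    rcases Set.mem_insert_iff.1 hX with hX | ⟨k, rfl⟩
    · subst hX
      have heq : T ⊓ Submodule.fst K U U = Submodule.span K {((z, 0) : U × U)} := by
        apply le_antisymm
        · intro x hx
          obtain ⟨hxT, hxF⟩ := Submodule.mem_inf.1 hx
          rw [hTs, Submodule.mem_span_pair] at hxT
          obtain ⟨s, t, rfl⟩ := hxT
          have hx2 : t • z = 0 := by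
            have := (Submodule.mem_comap.1 hxF : _)
            simpa using this
          have ht : t = 0 := by
            rcases smul_eq_zero.1 hx2 with h | h
            · exact h
            · exact absurd h hz0
          subst ht
          refine Submodule.mem_span_singleton.2 ⟨s, ?_⟩
          ext <;> simp
        · rw [Submodule.span_le, Set.singleton_subset_iff, SetLike.mem_coe, Submodule.mem_inf]
          refine ⟨hTs ▸ Submodule.subset_span (by simp), ?_⟩
          simp [Submodule.fst, Submodule.mem_comap]
      rw [heq]
      exact finrank_span_singleton (by simp [Prod.ext_iff, hz0])
    · have heq : T ⊓ LinearMap.range ((lam k : U →ₗ[K] U).prod (LinearMap.id : U →ₗ[K] U))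
          = Submodule.span K {((k • z, z) : U × U)} := by
        apply le_antisymm
        · intro x hx
          obtain ⟨hxT, hxR⟩ := Submodule.mem_inf.1 hx
          rw [hTs, Submodule.mem_span_pair] at hxT
          obtain ⟨s, t, rfl⟩ := hxT
          obtain ⟨u, hu⟩ := LinearMap.mem_range.1 hxR
          have hu1 : lam k u = s • z := by
            have := congrArg Prod.fst hu
            simpa using this
          have hu2 : u = t • z := by
            have := congrArg Prod.snd hu
            simpa using this
          have h1 : lam k (t • z) = (t * k) • z := by
            rw [map_smul, hlamz k, smul_smul]
          rw [hu2, h1] at hu1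
          have hst : s = t * k := by
            have h0 : (s - t * k) • z = 0 := by rw [sub_smul, hu1, sub_self]
            rcases smul_eq_zero.1 h0 with h | h
            · exact sub_eq_zero.1 h
            · exact absurd h hz0
          subst hst
          refine Submodule.mem_span_singleton.2 ⟨t, ?_⟩
          ext <;> simp [smul_smul]
        · rw [Submodule.span_le, Set.singleton_subset_iff, SetLike.mem_coe, Submodule.mem_inf]
          constructor
          · rw [hTs, Submodule.mem_span_pair]
            exact ⟨k, 1, by simp⟩
          · exact LinearMap.mem_range.2 ⟨z, by simp [hlamz k]⟩
      rw [heq]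
      exact finrank_span_singleton (by simp [Prod.ext_iff, hz0])
end
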